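/- Let G be a finite simple graph on vertex set {1,…,n} (no self-loops) in which every vertex has at least one neighbor. Let P = [Q₁ Q₂] ∈ ℝ^{n×d} be the column-wise concatenation of Q₁ ∈ ℝ^{n×d'} and Q₂ ∈ ℝ^{n×d''} with d = d' + d''. If Q₁ or Q₂ is node-identifying, then P is node-identifying; if Q₁ or Q₂ is adjacency-identifying, then P is adjacency-identifying; and if one of Q₁, Q₂ is node-identifying and the other is adjacency-identifying, then P is both node-identifying and adjacency-identifying. -/

import Mathlib

open Matrix

/-- The unnormalized attention matrix `(1/√d_k)·(P W^Q)(P W^K)ᵀ`. -/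
noncomputable def attn {n : ℕ} {m : Type*} [Fintype m] (dk : ℝ)
    (P : Matrix (Fin n) m ℝ) (WQ WK : Matrix m m ℝ) : Matrix (Fin n) (Fin n) ℝ :=
  (1 / Real.sqrt dk) • ((P * WQ) * (P * WK)ᵀ)

/-- `P` is node-identifying: for some `W^Q, W^K`, the `(i,j)` entry of
`(1/√d_k)·(P W^Q)(P W^K)ᵀ` is a maximum of its row exactly when `i = j`. -/
def IsNodeIdentifying {n : ℕ} {m : Type*} [Fintype m] (dk : ℝ)
    (P : Matrix (Fin n) m ℝ) : Prop :=
  ∃ WQ WK : Matrix m m ℝ, ∀ i j,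
    (∀ l, attn dk P WQ WK i l ≤ attn dk P WQ WK i j) ↔ i = j

/-- `P` is adjacency-identifying: for some `W^Q, W^K`, the `(i,j)` entry of
`(1/√d_k)·(P W^Q)(P W^K)ᵀ` is a maximum of its row exactly when `i` and `j` are adjacent. -/
def IsAdjIdentifying {n : ℕ} {m : Type*} [Fintype m] (dk : ℝ) (G : SimpleGraph (Fin n))
    (P : Matrix (Fin n) m ℝ) : Prop :=
  ∃ WQ WK : Matrix m m ℝ, ∀ i j,
    (∀ l, attn dk P WQ WK i l ≤ attn dk P WQ WK i j) ↔ G.Adj i j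

lemma attn_concat_left {n d1 d2 : ℕ} (dk : ℝ)
    (Q1 : Matrix (Fin n) (Fin d1) ℝ) (Q2 : Matrix (Fin n) (Fin d2) ℝ)
    (WQ WK : Matrix (Fin d1) (Fin d1) ℝ) :
    attn dk (Matrix.fromCols Q1 Q2) (Matrix.fromBlocks WQ 0 0 0)
      (Matrix.fromBlocks WK 0 0 0) = attn dk Q1 WQ WK := by
  unfold attn
  congr 1
  rw [fromCols_mul_fromBlocks, fromCols_mul_fromBlocks, transpose_fromCols,
    fromCols_mul_fromRows]
  simp

lemma attn_concat_right {n d1 d2 : ℕ} (dk : ℝ)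
    (Q1 : Matrix (Fin n) (Fin d1) ℝ) (Q2 : Matrix (Fin n) (Fin d2) ℝ)
    (WQ WK : Matrix (Fin d2) (Fin d2) ℝ) :
    attn dk (Matrix.fromCols Q1 Q2) (Matrix.fromBlocks 0 0 0 WQ)
      (Matrix.fromBlocks 0 0 0 WK) = attn dk Q2 WQ WK := by
  unfold attn
  congr 1
  rw [fromCols_mul_fromBlocks, fromCols_mul_fromBlocks, transpose_fromCols,
    fromCols_mul_fromRows]
  simp

lemma node_concat_left {n d1 d2 : ℕ} {dk : ℝ}
    {Q1 : Matrix (Fin n) (Fin d1) ℝ} {Q2 : Matrix (Fin n) (Fin d2) ℝ}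
    (h : IsNodeIdentifying dk Q1) : IsNodeIdentifying dk (Matrix.fromCols Q1 Q2) := by
  obtain ⟨WQ, WK, h⟩ := h
  exact ⟨Matrix.fromBlocks WQ 0 0 0, Matrix.fromBlocks WK 0 0 0, by
    simpa [attn_concat_left] using h⟩

lemma node_concat_right {n d1 d2 : ℕ} {dk : ℝ}
    {Q1 : Matrix (Fin n) (Fin d1) ℝ} {Q2 : Matrix (Fin n) (Fin d2) ℝ}
    (h : IsNodeIdentifying dk Q2) : IsNodeIdentifying dk (Matrix.fromCols Q1 Q2) := by
  obtain ⟨WQ, WK, h⟩ := h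
  exact ⟨Matrix.fromBlocks 0 0 0 WQ, Matrix.fromBlocks 0 0 0 WK, by
    simpa [attn_concat_right] using h⟩

lemma adj_concat_left {n d1 d2 : ℕ} {dk : ℝ} {G : SimpleGraph (Fin n)}
    {Q1 : Matrix (Fin n) (Fin d1) ℝ} {Q2 : Matrix (Fin n) (Fin d2) ℝ}
    (h : IsAdjIdentifying dk G Q1) : IsAdjIdentifying dk G (Matrix.fromCols Q1 Q2) := by
  obtain ⟨WQ, WK, h⟩ := h
  exact ⟨Matrix.fromBlocks WQ 0 0 0, Matrix.fromBlocks WK 0 0 0, by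
    simpa [attn_concat_left] using h⟩

lemma adj_concat_right {n d1 d2 : ℕ} {dk : ℝ} {G : SimpleGraph (Fin n)}
    {Q1 : Matrix (Fin n) (Fin d1) ℝ} {Q2 : Matrix (Fin n) (Fin d2) ℝ}
    (h : IsAdjIdentifying dk G Q2) : IsAdjIdentifying dk G (Matrix.fromCols Q1 Q2) := by
  obtain ⟨WQ, WK, h⟩ := h
  exact ⟨Matrix.fromBlocks 0 0 0 WQ, Matrix.fromBlocks 0 0 0 WK, by
    simpa [attn_concat_right] using h⟩

/-- node/adjacency identifiability is inherited by column-wise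
concatenation from either block. -/
theorem stmt10 {n d1 d2 : ℕ} (G : SimpleGraph (Fin n)) [DecidableRel G.Adj]
    (hdeg : ∀ v, 0 < G.degree v) (dk : ℝ) (hdk : 0 < dk)
    (Q1 : Matrix (Fin n) (Fin d1) ℝ) (Q2 : Matrix (Fin n) (Fin d2) ℝ) :
    ((IsNodeIdentifying dk Q1 ∨ IsNodeIdentifying dk Q2) →
        IsNodeIdentifying dk (Matrix.fromCols Q1 Q2)) ∧
    ((IsAdjIdentifying dk G Q1 ∨ IsAdjIdentifying dk G Q2) →
        IsAdjIdentifying dk G (Matrix.fromCols Q1 Q2)) ∧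
    (((IsNodeIdentifying dk Q1 ∧ IsAdjIdentifying dk G Q2) ∨
        (IsAdjIdentifying dk G Q1 ∧ IsNodeIdentifying dk Q2)) →
        IsNodeIdentifying dk (Matrix.fromCols Q1 Q2) ∧
          IsAdjIdentifying dk G (Matrix.fromCols Q1 Q2)) := by
  refine ⟨fun h => h.elim node_concat_left node_concat_right,
    fun h => h.elim adj_concat_left adj_concat_right, fun h => ?_⟩
  rcases h with ⟨h1, h2⟩ | ⟨h1, h2⟩
  · exact ⟨node_concat_left h1, adj_concat_right h2⟩
  · exact ⟨node_concat_right h2, adj_concat_left h1⟩
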